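/- Let ω be a non-negative integrable function on the interval (a,b) with ∫_a^b ω(y) dy = 1 and with y^k ω(y) integrable on (a,b) for every k ≥ 0, and let L_ω[f] = ∫_a^b f(y) ω(y) dy. Let (𝔭_k)_{k≥0} be a sequence of real polynomials with deg 𝔭_k = k orthogonal with respect to L_ω, let ζ ∉ (a,b) satisfy 𝔭_k(ζ) ≠ 0 for all k, and define K_n(x;ζ) = Σ_{k=0}^{n} (𝔭_k(ζ)/L_ω[𝔭_k^2]) 𝔭_k(x). Then for all real τ, σ and every n, ∫_a^b K_n(y;ζ) K_n((y−ζ)(τ+σx) + x; ζ) ω(y) dy = K_n(x;ζ) for all real x. -/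

import Mathlib

open MeasureTheory Set

/-- **Corollary** (existence half) of Dominici, "Polynomial solutions of nonlinear integral
equations": the kernel polynomials `Kₙ(x;ζ) = Σ_{k=0}^n (𝔭ₖ(ζ)/L_ω[𝔭ₖ²]) 𝔭ₖ(x)` solve the
nonlinear integral equation `∫ Kₙ(y;ζ) Kₙ((y-ζ)(τ+σx)+x;ζ) ω(y) dy = Kₙ(x;ζ)`. -/
theorem kernel_polynomials_solve_integral_eq (a b : ℝ) (ω : ℝ → ℝ)
    (hω_nonneg : ∀ y ∈ Ioo a b, 0 ≤ ω y)
    (hω_int : IntegrableOn ω (Ioo a b))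
    (hω_norm : (∫ y in Ioo a b, ω y) = 1)
    (h_moments : ∀ k : ℕ, IntegrableOn (fun y => y ^ k * ω y) (Ioo a b))
    -- the orthogonal polynomials 𝔭ₖ for L_ω
    (p : ℕ → Polynomial ℝ)
    (hpdeg : ∀ k, (p k).natDegree = k)
    (hporth : ∀ j k, j ≠ k →
      (∫ y in Ioo a b, (p j).eval y * (p k).eval y * ω y) = 0)
    (hpne : ∀ k, (∫ y in Ioo a b, ((p k).eval y) ^ 2 * ω y) ≠ 0)
    (ζ : ℝ) (hζ : ζ ∉ Ioo a b)
    (hpζ : ∀ k, (p k).eval ζ ≠ 0)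
    -- the kernel polynomials Kₙ(x;ζ)
    (K : ℕ → ℝ → ℝ)
    (hK : ∀ n x, K n x = ∑ k ∈ Finset.range (n + 1),
      ((p k).eval ζ / (∫ y in Ioo a b, ((p k).eval y) ^ 2 * ω y)) * (p k).eval x) :
    ∀ (τ σ : ℝ) (n : ℕ) (x : ℝ),
      (∫ y in Ioo a b, K n y * K n ((y - ζ) * (τ + σ * x) + x) * ω y) = K n x := by
  intro τ σ n x
  set t := τ + σ * x with ht
  set c : ℕ → ℝ := fun k => (p k).eval ζ / (∫ y in Ioo a b, ((p k).eval y) ^ 2 * ω y)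
    with hc
  -- every polynomial times ω is integrable
  have hpoly : ∀ q : Polynomial ℝ, IntegrableOn (fun y => q.eval y * ω y) (Ioo a b) := by
    intro q
    have h1 : ∀ y : ℝ, q.eval y * ω y
        = ∑ k ∈ Finset.range (q.natDegree + 1), q.coeff k * (y ^ k * ω y) := by
      intro y
      rw [Polynomial.eval_eq_sum_range, Finset.sum_mul]
      refine Finset.sum_congr rfl fun k _ => by ring
    have h2 : IntegrableOn
        (fun y => ∑ k ∈ Finset.range (q.natDegree + 1), q.coeff k * (y ^ k * ω y))
        (Ioo a b) :=
      integrable_finset_sum _ fun k _ => (h_moments k).const_mul (q.coeff k)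
    exact h2.congr (ae_of_all _ fun y => (h1 y).symm)
  -- K n as a polynomial evaluation
  set KP : Polynomial ℝ := ∑ k ∈ Finset.range (n + 1), Polynomial.C (c k) * p k with hKP
  have hKeval : ∀ y, K n y = KP.eval y := by
    intro y
    rw [hK, hKP]
    simp [Polynomial.eval_finset_sum, hc]
  have hKint : ∀ q : Polynomial ℝ,
      IntegrableOn (fun y => K n y * q.eval y * ω y) (Ioo a b) := by
    intro q
    have h := hpoly (KP * q)
    refine h.congr (ae_of_all _ fun y => ?_)
    show (KP * q).eval y * ω y = K n y * q.eval y * ω y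
    rw [Polynomial.eval_mul, hKeval y]
  -- reproducing property on the basis polynomials
  have hcard : ∀ j, j ≤ n →
      (∫ y in Ioo a b, K n y * (p j).eval y * ω y) = (p j).eval ζ := by
    intro j hj
    have h1 : (∫ y in Ioo a b, K n y * (p j).eval y * ω y)
        = ∫ y in Ioo a b, ∑ k ∈ Finset.range (n + 1),
            c k * ((p k).eval y * ((p j).eval y * ω y)) := by
      refine integral_congr_ae (ae_of_all _ fun y => ?_)
      show K n y * (p j).eval y * ω y = ∑ k ∈ Finset.range (n + 1),
        c k * ((p k).eval y * ((p j).eval y * ω y))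
      rw [hK, Finset.sum_mul, Finset.sum_mul]
      refine Finset.sum_congr rfl fun k _ => by ring
    have hint : ∀ k ∈ Finset.range (n + 1),
        IntegrableOn (fun y => c k * ((p k).eval y * ((p j).eval y * ω y))) (Ioo a b) := by
      intro k _
      have := (hpoly (p k * p j)).const_mul (c k)
      refine this.congr (ae_of_all _ fun y => ?_)
      show c k * ((p k * p j).eval y * ω y) = c k * ((p k).eval y * ((p j).eval y * ω y))
      rw [Polynomial.eval_mul]; ring
    rw [h1, integral_finset_sum _ hint]
    have h2 : ∀ k ∈ Finset.range (n + 1),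
        (∫ y in Ioo a b, c k * ((p k).eval y * ((p j).eval y * ω y)))
        = c k * ∫ y in Ioo a b, (p k).eval y * ((p j).eval y * ω y) := fun k _ =>
      integral_const_mul _ _
    rw [Finset.sum_congr rfl h2]
    rw [Finset.sum_eq_single j]
    · have hsq : (∫ y in Ioo a b, (p j).eval y * ((p j).eval y * ω y))
          = ∫ y in Ioo a b, ((p j).eval y) ^ 2 * ω y := by
        refine integral_congr_ae (ae_of_all _ fun y => ?_); ring
      rw [hsq, hc]
      exact div_mul_cancel₀ _ (hpne j)
    · intro k _ hkj
      have := hporth k j hkj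
      have h3 : (∫ y in Ioo a b, (p k).eval y * ((p j).eval y * ω y))
          = ∫ y in Ioo a b, (p k).eval y * (p j).eval y * ω y := by
        refine integral_congr_ae (ae_of_all _ fun y => ?_); ring
      rw [h3, this, mul_zero]
    · intro hjmem
      exact absurd (Finset.mem_range.mpr (Nat.lt_succ_of_le hj)) hjmem
  -- reproducing property: for any polynomial of degree ≤ n
  have hrepr : ∀ d : ℕ, ∀ q : Polynomial ℝ, q.natDegree ≤ d → q.natDegree ≤ n →
      (∫ y in Ioo a b, K n y * q.eval y * ω y) = q.eval ζ := by
    intro d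
    induction d with
    | zero =>
      intro q hq0 _
      have hqC := Polynomial.eq_C_of_natDegree_le_zero hq0
      have hp0C := Polynomial.eq_C_of_natDegree_le_zero (le_of_eq (hpdeg 0))
      set a0 := q.coeff 0
      set b0 := (p 0).coeff 0
      have hb0 : b0 ≠ 0 := by
        intro h
        apply hpζ 0
        rw [hp0C, h]; simp
      have h1 : (∫ y in Ioo a b, K n y * q.eval y * ω y)
          = ∫ y in Ioo a b, (a0 / b0) * (K n y * (p 0).eval y * ω y) := by
        refine integral_congr_ae (ae_of_all _ fun y => ?_)
        rw [hqC, hp0C]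
        simp only [Polynomial.eval_C]
        field_simp
      rw [h1, integral_const_mul, hcard 0 (Nat.zero_le n), hqC, hp0C]
      simp only [Polynomial.eval_C]
      field_simp
    | succ d ih =>
      intro q hq hqn
      by_cases hd : q.natDegree ≤ d
      · exact ih q hd hqn
      · have hdeg : q.natDegree = d + 1 := le_antisymm hq (Nat.succ_le_of_lt (lt_of_not_ge hd))
        have hdn : d + 1 ≤ n := hdeg ▸ hqn
        have hpc : (p (d + 1)).coeff (d + 1) ≠ 0 := by
          have hne : p (d + 1) ≠ 0 := fun h => hpζ (d + 1) (by rw [h]; simp)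
          have := Polynomial.leadingCoeff_ne_zero.mpr hne
          rwa [Polynomial.leadingCoeff, hpdeg] at this
        set c0 := q.coeff (d + 1) / (p (d + 1)).coeff (d + 1) with hc0
        set r := q - Polynomial.C c0 * p (d + 1) with hr
        have hrd : r.natDegree ≤ d := by
          rw [Polynomial.natDegree_le_iff_coeff_eq_zero]
          intro m hm
          rw [hr, Polynomial.coeff_sub, Polynomial.coeff_C_mul]
          rcases eq_or_lt_of_le (Nat.succ_le_of_lt hm) with h | h
          · rw [← h, hc0, div_mul_cancel₀ _ hpc, sub_self]
          · rw [Polynomial.coeff_eq_zero_of_natDegree_lt (lt_of_le_of_lt hq h),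
              Polynomial.coeff_eq_zero_of_natDegree_lt (by rw [hpdeg]; exact h),
              mul_zero, sub_zero]
        have hq_eq : q = r + Polynomial.C c0 * p (d + 1) := by rw [hr]; ring
        have h1 : (∫ y in Ioo a b, K n y * q.eval y * ω y)
            = ∫ y in Ioo a b, (K n y * r.eval y * ω y
                + c0 * (K n y * (p (d + 1)).eval y * ω y)) := by
          refine integral_congr_ae (ae_of_all _ fun y => ?_)
          rw [hq_eq]
          simp only [Polynomial.eval_add, Polynomial.eval_mul, Polynomial.eval_C]
          ring
        rw [h1, integral_add (hKint r) ((hKint (p (d + 1))).const_mul c0),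
          integral_const_mul, ih r hrd (le_trans hrd (le_trans (Nat.le_succ d) hdn)),
          hcard (d + 1) hdn, hq_eq]
        simp only [Polynomial.eval_add, Polynomial.eval_mul, Polynomial.eval_C]
  -- the composed polynomial
  set lin : Polynomial ℝ :=
    Polynomial.C t * (Polynomial.X - Polynomial.C ζ) + Polynomial.C x with hlin
  set Q : Polynomial ℝ :=
    ∑ k ∈ Finset.range (n + 1), Polynomial.C (c k) * (p k).comp lin with hQ
  have hlineval : ∀ y : ℝ, lin.eval y = t * (y - ζ) + x := by
    intro y; rw [hlin]; simp
  have hQev : ∀ y : ℝ, Q.eval y = K n ((y - ζ) * t + x) := by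
    intro y
    rw [hK, hQ]
    rw [Polynomial.eval_finset_sum]
    refine Finset.sum_congr rfl fun k _ => ?_
    rw [Polynomial.eval_mul, Polynomial.eval_C, Polynomial.eval_comp, hlineval,
      mul_comm t (y - ζ)]
  have hlindeg : lin.natDegree ≤ 1 := by
    rw [hlin]
    refine le_trans (Polynomial.natDegree_add_le _ _) ?_
    simp only [Polynomial.natDegree_C, max_le_iff]
    constructor
    · refine le_trans (Polynomial.natDegree_mul_le) ?_
      simp [Polynomial.natDegree_X_sub_C]
    · exact Nat.zero_le 1
  have hQdeg : Q.natDegree ≤ n := by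
    rw [hQ]
    refine Polynomial.natDegree_sum_le_of_forall_le _ _ fun k hk => ?_
    refine le_trans (Polynomial.natDegree_mul_le) ?_
    rw [Polynomial.natDegree_C, zero_add]
    refine le_trans (Polynomial.natDegree_comp_le) ?_
    calc (p k).natDegree * lin.natDegree ≤ k * 1 := by
          rw [hpdeg]; exact Nat.mul_le_mul_left _ hlindeg
      _ ≤ n := by rw [mul_one]; exact Nat.lt_succ_iff.mp (Finset.mem_range.mp hk)
  have hQζ : Q.eval ζ = K n x := by
    rw [hK, hQ, Polynomial.eval_finset_sum]
    refine Finset.sum_congr rfl fun k _ => ?_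
    rw [Polynomial.eval_mul, Polynomial.eval_C, Polynomial.eval_comp, hlineval]
    simp [hc]
  have hfinal : (∫ y in Ioo a b, K n y * K n ((y - ζ) * t + x) * ω y)
      = ∫ y in Ioo a b, K n y * Q.eval y * ω y := by
    refine integral_congr_ae (ae_of_all _ fun y => ?_)
    show K n y * K n ((y - ζ) * t + x) * ω y = K n y * Q.eval y * ω y
    rw [hQev]
  rw [hfinal, hrepr n Q hQdeg hQdeg, hQζ]
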